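/- Let X be a Banach space of Rademacher type q ∈ [1,2] with constant C_q. Let (Ω, 𝔽, ℙ) be a probability space and X₁, …, Xₙ : Ω → X independent random variables such that each ‖Xᵢ‖^q is integrable and each Xᵢ has mean zero (Bochner integral ∫ Xᵢ dℙ = 0). Then (∫ ‖Σᵢ₌₁ⁿ Xᵢ‖^q dℙ)^{1/q} ≤ 2·C_q·(Σᵢ₌₁ⁿ ∫ ‖Xᵢ‖^q dℙ)^{1/q}. -/

import Mathlib

open Finset MeasureTheory ProbabilityTheory

/-- Random sign combination `∑ i, εᵢ • xᵢ` of a finite sequence, where the signs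
are encoded by a Boolean vector (`true ↦ +1`, `false ↦ -1`). -/
noncomputable def signSum {E : Type*} [NormedAddCommGroup E] [NormedSpace ℝ E]
    {n : ℕ} (x : Fin n → E) (ε : Fin n → Bool) : E :=
  ∑ i, (if ε i then (1 : ℝ) else -1) • x i

open scoped ENNReal NNReal

theorem aux_main
    {E : Type*} [NormedAddCommGroup E] [NormedSpace ℝ E] [CompleteSpace E]
    [MeasurableSpace E] [BorelSpace E] [SecondCountableTopology E]
    (q Cq : ℝ) (hq1 : 1 ≤ q) (hCq : 0 ≤ Cq)
    (htype : ∀ (m : ℕ) (x : Fin m → E),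
      ((∑ ε : Fin m → Bool, ‖signSum x ε‖ ^ q) / 2 ^ m) ^ (1 / q) ≤
        Cq * (∑ i, ‖x i‖ ^ q) ^ (1 / q))
    {Ω : Type*} [MeasurableSpace Ω] (μ : Measure Ω) [IsProbabilityMeasure μ]
    (n : ℕ) (X : Fin n → Ω → E)
    (hmeas : ∀ i, Measurable (X i))
    (hindep : iIndepFun (m := fun _ : Fin n => (inferInstance : MeasurableSpace E)) X μ)
    (hint : ∀ i, Integrable (fun ω => ‖X i ω‖ ^ q) μ)
    (hmean : ∀ i, ∫ ω, X i ω ∂μ = 0) :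
    (∫ ω, ‖∑ i, X i ω‖ ^ q ∂μ) ^ (1 / q) ≤
      2 * Cq * (∑ i, ∫ ω, ‖X i ω‖ ^ q ∂μ) ^ (1 / q) := by
  have hq0 : (0:ℝ) < q := lt_of_lt_of_le one_pos hq1
  set qq : ℝ≥0∞ := ENNReal.ofReal q with hqq
  have hqq0 : qq ≠ 0 := by simp [hqq, ENNReal.ofReal_eq_zero, not_le, hq0]
  have hqqt : qq ≠ ∞ := ENNReal.ofReal_ne_top
  have hqqr : qq.toReal = q := ENNReal.toReal_ofReal hq0.le
  have hqq1 : 1 ≤ qq := by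
    rw [hqq, ← ENNReal.ofReal_one]; exact ENNReal.ofReal_le_ofReal hq1
  set ν : Measure (Ω × Ω) := μ.prod μ with hν
  set S : Ω → E := fun ω => ∑ i, X i ω with hS
  have hSmeas : Measurable S := Finset.measurable_sum _ (fun i _ => hmeas i)
  set B : Fin n → ℝ≥0∞ := fun i => ∫⁻ ω, (‖X i ω‖₊ : ℝ≥0∞) ^ q ∂μ with hB
  -- conversion of real rpow of norm to ennreal
  have hofReal : ∀ (e : E), ENNReal.ofReal (‖e‖ ^ q) = (‖e‖₊ : ℝ≥0∞) ^ q := by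
    intro e
    rw [← ENNReal.ofReal_rpow_of_nonneg (norm_nonneg _) hq0.le, ofReal_norm, enorm_eq_nnnorm]
  have hBfin : ∀ i, B i ≠ ∞ := by
    intro i
    have := (hint i).2
    rw [HasFiniteIntegral] at this
    have heq : ∀ ω, (‖(‖X i ω‖ ^ q)‖₊ : ℝ≥0∞) = (‖X i ω‖₊ : ℝ≥0∞) ^ q := by
      intro ω
      rw [← enorm_eq_nnnorm, Real.enorm_eq_ofReal (Real.rpow_nonneg (norm_nonneg _) _), hofReal]
    rw [hB]
    simp only [← heq]
    exact this.ne
  -- integrability of each X i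
  have hXint : ∀ i, Integrable (X i) μ := by
    intro i
    refine MemLp.integrable hqq1 ⟨(hmeas i).aestronglyMeasurable, ?_⟩
    rw [eLpNorm_eq_lintegral_rpow_enorm_toReal hqq0 hqqt, hqqr]
    exact ENNReal.rpow_lt_top_of_nonneg (by positivity) (hBfin i)
  have hSint : Integrable S μ := integrable_finset_sum _ (fun i _ => hXint i)
  have hSmean : ∫ ω, S ω ∂μ = 0 := by
    rw [hS, integral_finset_sum _ (fun i _ => hXint i)]
    simp [hmean]
  -- measurability of the ennreal integrand on the product
  have hmeasD : ∀ (f g : Ω × Ω → E), Measurable f → Measurable g →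
      Measurable (fun p => (‖f p - g p‖₊ : ℝ≥0∞) ^ q) := by
    intro f g hf hg
    exact ((hf.sub hg).nnnorm.coe_nnreal_ennreal).pow_const _
  have hSd : Measurable (fun p : Ω × Ω => (‖S p.1 - S p.2‖₊ : ℝ≥0∞) ^ q) :=
    hmeasD _ _ (hSmeas.comp measurable_fst) (hSmeas.comp measurable_snd)
  set M : ℝ≥0∞ := ∫⁻ p, (‖S p.1 - S p.2‖₊ : ℝ≥0∞) ^ q ∂ν with hM
  -- Jensen / symmetrization step 1
  have hJ : ∫⁻ ω, (‖S ω‖₊ : ℝ≥0∞) ^ q ∂μ ≤ M := by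
    have hpt : ∀ ω, (‖S ω‖₊ : ℝ≥0∞) ^ q ≤ ∫⁻ ω', (‖S ω - S ω'‖₊ : ℝ≥0∞) ^ q ∂μ := by
      intro ω
      have h1 : S ω = ∫ ω', (S ω - S ω') ∂μ := by
        rw [integral_sub (integrable_const _) hSint, integral_const, hSmean,
          probReal_univ, one_smul, sub_zero]
      have h2 : (‖S ω‖₊ : ℝ≥0∞) ≤ ∫⁻ ω', (‖S ω - S ω'‖₊ : ℝ≥0∞) ∂μ := by
        calc (‖S ω‖₊ : ℝ≥0∞) = ‖∫ ω', (S ω - S ω') ∂μ‖₊ := by rw [← h1]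
        _ ≤ ∫⁻ ω', (‖S ω - S ω'‖₊ : ℝ≥0∞) ∂μ := enorm_integral_le_lintegral_enorm _
      have h3 : (∫⁻ ω', (‖S ω - S ω'‖₊ : ℝ≥0∞) ∂μ) ≤
          (∫⁻ ω', (‖S ω - S ω'‖₊ : ℝ≥0∞) ^ q ∂μ) ^ (1 / q) := by
        have := eLpNorm_le_eLpNorm_of_exponent_le (μ := μ)
          (f := fun ω' => S ω - S ω') hqq1
          ((aestronglyMeasurable_const).sub hSmeas.aestronglyMeasurable)
        rwa [eLpNorm_one_eq_lintegral_enorm,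
          eLpNorm_eq_lintegral_rpow_enorm_toReal hqq0 hqqt, hqqr] at this
      calc (‖S ω‖₊ : ℝ≥0∞) ^ q ≤
          ((∫⁻ ω', (‖S ω - S ω'‖₊ : ℝ≥0∞) ^ q ∂μ) ^ (1 / q)) ^ q :=
            ENNReal.rpow_le_rpow (le_trans h2 h3) hq0.le
      _ = ∫⁻ ω', (‖S ω - S ω'‖₊ : ℝ≥0∞) ^ q ∂μ := by
            rw [← ENNReal.rpow_mul, one_div, inv_mul_cancel₀ hq0.ne', ENNReal.rpow_one]
    calc ∫⁻ ω, (‖S ω‖₊ : ℝ≥0∞) ^ q ∂μ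
        ≤ ∫⁻ ω, ∫⁻ ω', (‖S ω - S ω'‖₊ : ℝ≥0∞) ^ q ∂μ ∂μ := lintegral_mono hpt
      _ = M := by
          rw [hM, hν, lintegral_prod _ hSd.aemeasurable]
  -- laws
  have hprob : ∀ i : Fin n, IsProbabilityMeasure (μ.map (X i)) :=
    fun i => Measure.isProbabilityMeasure_map (hmeas i).aemeasurable
  set π₀ : Measure (Fin n → E) := Measure.pi (fun i => μ.map (X i)) with hπ₀
  have hTmeas : Measurable (fun ω (i : Fin n) => X i ω) :=
    measurable_pi_lambda _ (fun i => hmeas i)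
  have hA : π₀ = μ.map (fun ω i => X i ω) := by
    refine Measure.pi_eq fun A hAm => ?_
    rw [Measure.map_apply hTmeas (MeasurableSet.univ_pi hAm)]
    have hpre : (fun ω i => X i ω) ⁻¹' (Set.univ.pi A) = ⋂ i ∈ Finset.univ, X i ⁻¹' A i := by
      ext ω; simp [Set.mem_pi]
    rw [hpre, hindep.measure_inter_preimage_eq_mul Finset.univ (fun i _ => hAm i)]
    exact Finset.prod_congr rfl fun i _ => (Measure.map_apply (hmeas i) (hAm i)).symm
  set σm : Measure (Fin n → E × E) :=
    Measure.pi (fun i => (μ.map (X i)).prod (μ.map (X i))) with hσm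
  set Y : Ω × Ω → (Fin n → E × E) := fun p i => (X i p.1, X i p.2) with hYdef
  have hYmeas : Measurable Y := measurable_pi_lambda _ (fun i =>
    ((hmeas i).comp measurable_fst).prodMk ((hmeas i).comp measurable_snd))
  have hlawY : ν.map Y = σm := by
    have he := measurePreserving_arrowProdEquivProdArrow E E (Fin n)
      (fun i => μ.map (X i)) (fun i => μ.map (X i))
    set e := MeasurableEquiv.arrowProdEquivProdArrow E E (Fin n) with hedef
    have hcomp : (⇑e) ∘ Y = Prod.map (fun ω i => X i ω) (fun ω i => X i ω) := rfl
    have h1 : (ν.map Y).map e = σm.map e := by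
      have hA' : (Measure.pi fun i => Measure.map (X i) μ)
          = Measure.map (fun ω i => X i ω) μ := by rw [← hπ₀]; exact hA
      rw [Measure.map_map e.measurable hYmeas, hcomp, hν,
        ← Measure.map_prod_map _ _ hTmeas hTmeas, he.map_eq, ← hA']
    have := congrArg (fun m : Measure ((Fin n → E) × (Fin n → E)) => m.map e.symm) h1
    simpa [Measure.map_map e.symm.measurable e.measurable,
      MeasurableEquiv.symm_comp_self, Measure.map_id] using this
  have hΦ : ∀ c : Fin n → Bool, MeasurePreserving
      (fun (y : Fin n → E × E) i => if c i then y i else (y i).swap) σm σm := by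
    intro c
    exact measurePreserving_pi _ _
      (f := fun i (z : E × E) => if c i then z else z.swap)
      (fun i => by
        cases hc : c i
        · simpa [hc] using Measure.measurePreserving_swap
        · simp only [hc, ↓reduceIte]; exact MeasurePreserving.id _)
  have hsym : ∀ ε : Fin n → Bool,
      ∫⁻ p, (‖∑ i, (if ε i then (1:ℝ) else -1) • (X i p.1 - X i p.2)‖₊ : ℝ≥0∞) ^ q ∂ν = M := by
    intro ε
    set g : (Fin n → E × E) → ℝ≥0∞ := fun y => (‖∑ i, ((y i).1 - (y i).2)‖₊ : ℝ≥0∞) ^ q with hg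
    have hgmeas : Measurable g := by
      apply Measurable.pow_const
      apply Measurable.coe_nnreal_ennreal
      apply Measurable.nnnorm
      exact Finset.measurable_sum _ (fun i _ =>
        (measurable_fst.comp (measurable_pi_apply i)).sub
          (measurable_snd.comp (measurable_pi_apply i)))
    set Φ : (Fin n → E × E) → (Fin n → E × E) :=
      fun y i => if ε i then y i else (y i).swap with hΦdef
    have hkey : ∀ p : Ω × Ω, g (Φ (Y p)) =
        (‖∑ i, (if ε i then (1:ℝ) else -1) • (X i p.1 - X i p.2)‖₊ : ℝ≥0∞) ^ q := by
      intro p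
      have hsum : ∑ i, (((Φ (Y p)) i).1 - ((Φ (Y p)) i).2)
          = ∑ i, (if ε i then (1:ℝ) else -1) • (X i p.1 - X i p.2) := by
        refine Finset.sum_congr rfl fun i _ => ?_
        cases hc : ε i <;> simp [hΦdef, hYdef, hc, neg_sub]
      rw [hg]; dsimp only; rw [hsum]
    have hmapΦY : ν.map (Φ ∘ Y) = σm := by
      rw [← Measure.map_map (hΦ ε).measurable hYmeas, hlawY]
      exact (hΦ ε).map_eq
    have hMg : M = ∫⁻ y, g y ∂σm := by
      rw [← hlawY, lintegral_map hgmeas hYmeas, hM]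
      refine lintegral_congr fun p => ?_
      rw [hg]; dsimp only
      congr 2
      rw [hS]; dsimp only
      rw [← Finset.sum_sub_distrib]
    calc ∫⁻ p, (‖∑ i, (if ε i then (1:ℝ) else -1) • (X i p.1 - X i p.2)‖₊ : ℝ≥0∞) ^ q ∂ν
        = ∫⁻ p, g (Φ (Y p)) ∂ν := by
          exact (lintegral_congr fun p => (hkey p)).symm
      _ = ∫⁻ y, g y ∂(ν.map (Φ ∘ Y)) := by
          rw [lintegral_map hgmeas ((hΦ ε).measurable.comp hYmeas)]; rfl
      _ = ∫⁻ y, g y ∂σm := by rw [hmapΦY]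
      _ = M := hMg.symm
  -- Mi : symmetrized second moments
  set Mi : Fin n → ℝ≥0∞ := fun i => ∫⁻ p, (‖X i p.1 - X i p.2‖₊ : ℝ≥0∞) ^ q ∂ν with hMi
  have hMimeas : ∀ i, Measurable (fun p : Ω × Ω => (‖X i p.1 - X i p.2‖₊ : ℝ≥0∞) ^ q) :=
    fun i => hmeasD _ _ ((hmeas i).comp measurable_fst) ((hmeas i).comp measurable_snd)
  have hWmeas : ∀ ε : Fin n → Bool, Measurable (fun p : Ω × Ω =>
      (‖∑ i, (if ε i then (1:ℝ) else -1) • (X i p.1 - X i p.2)‖₊ : ℝ≥0∞) ^ q) := by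
    intro ε
    apply Measurable.pow_const
    apply Measurable.coe_nnreal_ennreal
    apply Measurable.nnnorm
    exact Finset.measurable_sum _ (fun i _ =>
      (((hmeas i).comp measurable_fst).sub ((hmeas i).comp measurable_snd)).const_smul _)
  -- pointwise type inequality
  have hpt : ∀ p : Ω × Ω,
      ∑ ε : Fin n → Bool, (‖∑ i, (if ε i then (1:ℝ) else -1) • (X i p.1 - X i p.2)‖₊ : ℝ≥0∞) ^ q
        ≤ (2:ℝ≥0∞) ^ n * (ENNReal.ofReal (Cq ^ q) * ∑ i, (‖X i p.1 - X i p.2‖₊ : ℝ≥0∞) ^ q) := by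
    intro p
    set y : Fin n → E := fun i => X i p.1 - X i p.2 with hy
    have hb : (0:ℝ) ≤ ∑ i, ‖y i‖ ^ q :=
      Finset.sum_nonneg fun i _ => Real.rpow_nonneg (norm_nonneg _) _
    have ha : (0:ℝ) ≤ ∑ ε : Fin n → Bool, ‖signSum y ε‖ ^ q :=
      Finset.sum_nonneg fun ε _ => Real.rpow_nonneg (norm_nonneg _) _
    have hreal : ∑ ε : Fin n → Bool, ‖signSum y ε‖ ^ q ≤ 2 ^ n * (Cq ^ q * ∑ i, ‖y i‖ ^ q) := by
      have h2 := Real.rpow_le_rpow (by positivity) (htype n y) hq0.le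
      rw [← Real.rpow_mul (by positivity), one_div, inv_mul_cancel₀ hq0.ne',
        Real.rpow_one, Real.mul_rpow hCq (Real.rpow_nonneg hb _),
        ← Real.rpow_mul hb, inv_mul_cancel₀ hq0.ne', Real.rpow_one] at h2
      rw [div_le_iff₀ (by positivity : (0:ℝ) < 2 ^ n)] at h2
      linarith [h2]
    have hsign : ∀ ε : Fin n → Bool,
        (‖∑ i, (if ε i then (1:ℝ) else -1) • (X i p.1 - X i p.2)‖₊ : ℝ≥0∞) ^ q
          = (‖signSum y ε‖₊ : ℝ≥0∞) ^ q := by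
      intro ε; rfl
    calc ∑ ε : Fin n → Bool,
          (‖∑ i, (if ε i then (1:ℝ) else -1) • (X i p.1 - X i p.2)‖₊ : ℝ≥0∞) ^ q
        = ENNReal.ofReal (∑ ε : Fin n → Bool, ‖signSum y ε‖ ^ q) := by
          rw [ENNReal.ofReal_sum_of_nonneg
            (fun ε _ => Real.rpow_nonneg (norm_nonneg _) _)]
          exact Finset.sum_congr rfl fun ε _ => by rw [hsign ε, hofReal]
      _ ≤ ENNReal.ofReal (2 ^ n * (Cq ^ q * ∑ i, ‖y i‖ ^ q)) := ENNReal.ofReal_le_ofReal hreal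
      _ = (2:ℝ≥0∞) ^ n * (ENNReal.ofReal (Cq ^ q) * ∑ i, (‖X i p.1 - X i p.2‖₊ : ℝ≥0∞) ^ q) := by
          rw [ENNReal.ofReal_mul (by positivity), ENNReal.ofReal_mul (by positivity),
            ENNReal.ofReal_sum_of_nonneg (fun i _ => Real.rpow_nonneg (norm_nonneg _) _),
            ENNReal.ofReal_pow (by norm_num : (0:ℝ) ≤ 2)]
          congr 1
          · norm_num
          · congr 1
            exact Finset.sum_congr rfl fun i _ => hofReal _
  -- average over signs
  have hMle : M ≤ ENNReal.ofReal (Cq ^ q) * ∑ i, Mi i := by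
    have h2n0 : ((2:ℝ≥0∞) ^ n) ≠ 0 := by positivity
    have h2nt : ((2:ℝ≥0∞) ^ n) ≠ ⊤ := by
      exact ENNReal.pow_ne_top (by norm_num)
    rw [← ENNReal.mul_le_mul_iff_right h2n0 h2nt]
    have hcard : (Fintype.card (Fin n → Bool) : ℝ≥0∞) = (2:ℝ≥0∞) ^ n := by
      rw [Fintype.card_fun]
      simp
    calc (2:ℝ≥0∞) ^ n * M
        = ∑ ε : Fin n → Bool, ∫⁻ p,
            (‖∑ i, (if ε i then (1:ℝ) else -1) • (X i p.1 - X i p.2)‖₊ : ℝ≥0∞) ^ q ∂ν := by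
          rw [Finset.sum_congr rfl fun ε _ => hsym ε, Finset.sum_const, Finset.card_univ,
            nsmul_eq_mul, ← hcard]
      _ = ∫⁻ p, ∑ ε : Fin n → Bool,
            (‖∑ i, (if ε i then (1:ℝ) else -1) • (X i p.1 - X i p.2)‖₊ : ℝ≥0∞) ^ q ∂ν :=
          (lintegral_finset_sum _ (fun ε _ => hWmeas ε)).symm
      _ ≤ ∫⁻ p, (2:ℝ≥0∞) ^ n *
            (ENNReal.ofReal (Cq ^ q) * ∑ i, (‖X i p.1 - X i p.2‖₊ : ℝ≥0∞) ^ q) ∂ν :=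
          lintegral_mono hpt
      _ = (2:ℝ≥0∞) ^ n * (ENNReal.ofReal (Cq ^ q) * ∑ i, Mi i) := by
          rw [lintegral_const_mul _ ((Finset.measurable_sum _
            (fun i _ => hMimeas i)).const_mul _), lintegral_const_mul _
            (Finset.measurable_sum _ (fun i _ => hMimeas i)),
            lintegral_finset_sum _ (fun i _ => hMimeas i)]
  -- Minkowski: Mi i ≤ 2^q * B i
  have hMink : ∀ i, Mi i ≤ (2:ℝ≥0∞) ^ (q:ℝ) * B i := by
    intro i
    have hfst : MeasurePreserving (Prod.fst : Ω × Ω → Ω) ν μ :=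
      ⟨measurable_fst, by rw [hν, Measure.map_fst_prod, measure_univ, one_smul]⟩
    have hsnd : MeasurePreserving (Prod.snd : Ω × Ω → Ω) ν μ :=
      ⟨measurable_snd, by rw [hν, Measure.map_snd_prod, measure_univ, one_smul]⟩
    have hgm : Measurable (fun ω => (‖X i ω‖₊ : ℝ≥0∞) ^ q) :=
      ((hmeas i).nnnorm.coe_nnreal_ennreal).pow_const _
    have hBfst : ∫⁻ p, (‖X i p.1‖₊ : ℝ≥0∞) ^ q ∂ν = B i := hfst.lintegral_comp hgm
    have hBsnd : ∫⁻ p, (‖X i p.2‖₊ : ℝ≥0∞) ^ q ∂ν = B i := hsnd.lintegral_comp hgm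
    have h1 : eLpNorm (fun p : Ω × Ω => X i p.1 - X i p.2) qq ν ≤
        eLpNorm (fun p : Ω × Ω => X i p.1) qq ν + eLpNorm (fun p : Ω × Ω => X i p.2) qq ν :=
      eLpNorm_sub_le (((hmeas i).comp measurable_fst).aestronglyMeasurable)
        (((hmeas i).comp measurable_snd).aestronglyMeasurable) hqq1
    rw [eLpNorm_eq_lintegral_rpow_enorm_toReal hqq0 hqqt, eLpNorm_eq_lintegral_rpow_enorm_toReal hqq0 hqqt,
      eLpNorm_eq_lintegral_rpow_enorm_toReal hqq0 hqqt, hqqr] at h1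
    simp only [enorm_eq_nnnorm] at h1; rw [hBfst, hBsnd, ← two_mul] at h1
    have h2 := ENNReal.rpow_le_rpow h1 hq0.le
    rw [← ENNReal.rpow_mul, one_div, inv_mul_cancel₀ hq0.ne', ENNReal.rpow_one,
      ENNReal.mul_rpow_of_nonneg _ _ hq0.le, ← ENNReal.rpow_mul,
      inv_mul_cancel₀ hq0.ne', ENNReal.rpow_one] at h2
    exact h2
  -- combine in ℝ≥0∞
  have hfinal : (∫⁻ ω, (‖S ω‖₊ : ℝ≥0∞) ^ q ∂μ) ^ (1/q) ≤
      ENNReal.ofReal Cq * 2 * (∑ i, B i) ^ (1/q) := by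
    have hchain : ∫⁻ ω, (‖S ω‖₊ : ℝ≥0∞) ^ q ∂μ ≤
        (ENNReal.ofReal Cq) ^ (q:ℝ) * ((2:ℝ≥0∞) ^ (q:ℝ) * ∑ i, B i) := by
      refine le_trans hJ (le_trans hMle ?_)
      rw [ENNReal.ofReal_rpow_of_nonneg hCq hq0.le]
      refine mul_le_mul_right ?_ _
      rw [Finset.mul_sum]
      exact Finset.sum_le_sum fun i _ => hMink i
    calc (∫⁻ ω, (‖S ω‖₊ : ℝ≥0∞) ^ q ∂μ) ^ (1/q)
        ≤ ((ENNReal.ofReal Cq) ^ (q:ℝ) * ((2:ℝ≥0∞) ^ (q:ℝ) * ∑ i, B i)) ^ (1/q) :=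
          ENNReal.rpow_le_rpow hchain (by positivity)
      _ = ENNReal.ofReal Cq * 2 * (∑ i, B i) ^ (1/q) := by
          rw [ENNReal.mul_rpow_of_nonneg _ _ (by positivity),
            ENNReal.mul_rpow_of_nonneg _ _ (by positivity),
            ← ENNReal.rpow_mul, ← ENNReal.rpow_mul, one_div,
            mul_inv_cancel₀ hq0.ne', ENNReal.rpow_one, ENNReal.rpow_one, mul_assoc]
  -- back to real integrals
  have hconv : ∀ (f : Ω → E), AEStronglyMeasurable f μ →
      ∫ ω, ‖f ω‖ ^ q ∂μ = (∫⁻ ω, (‖f ω‖₊ : ℝ≥0∞) ^ q ∂μ).toReal := by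
    intro f hf
    rw [integral_eq_lintegral_of_nonneg_ae
      (Filter.Eventually.of_forall fun ω => Real.rpow_nonneg (norm_nonneg _) _)
      ((hf.norm.aemeasurable.pow_const q).aestronglyMeasurable)]
    congr 1
    exact lintegral_congr fun ω => hofReal _
  have hsumBfin : (∑ i, B i) ≠ ⊤ := by
    refine (ENNReal.sum_lt_top.mpr fun i _ => ?_).ne
    exact lt_top_iff_ne_top.mpr (hBfin i)
  have hRfin : ENNReal.ofReal Cq * 2 * (∑ i, B i) ^ (1/q) ≠ ⊤ := by
    apply ENNReal.mul_ne_top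
    · exact ENNReal.mul_ne_top ENNReal.ofReal_ne_top (by norm_num)
    · exact ENNReal.rpow_ne_top_of_nonneg (by positivity) hsumBfin
  rw [hconv S hSmeas.aestronglyMeasurable,
    Finset.sum_congr rfl (fun i _ => hconv (X i) (hmeas i).aestronglyMeasurable),
    ← ENNReal.toReal_sum (fun i _ => hBfin i), ENNReal.toReal_rpow, ENNReal.toReal_rpow]
  have := ENNReal.toReal_mono hRfin hfinal
  rw [ENNReal.toReal_mul, ENNReal.toReal_mul, ENNReal.toReal_ofReal hCq] at this
  calc ((∫⁻ ω, (‖S ω‖₊ : ℝ≥0∞) ^ q ∂μ) ^ (1/q)).toReal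
      ≤ Cq * (2:ℝ≥0∞).toReal * ((∑ i, B i) ^ (1/q)).toReal := this
    _ = 2 * Cq * ((∑ i, B i) ^ (1/q)).toReal := by
        rw [ENNReal.toReal_ofNat]
        ring


/-- Ledoux–Talagrand, Proposition 9.11: in a Banach space of
Rademacher type `q ∈ [1,2]` with constant `C_q`, independent mean-zero random
variables `X₁,…,Xₙ` with `‖Xᵢ‖^q` integrable satisfy
`(E‖∑ Xᵢ‖^q)^(1/q) ≤ 2·C_q·(∑ E‖Xᵢ‖^q)^(1/q)`. -/
theorem rademacher_type_independent_sum_bound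
    {E : Type*} [NormedAddCommGroup E] [NormedSpace ℝ E] [CompleteSpace E]
    [MeasurableSpace E] [BorelSpace E]
    (q Cq : ℝ) (hq1 : 1 ≤ q) (hq2 : q ≤ 2)
    (htype : ∀ (m : ℕ) (x : Fin m → E),
      ((∑ ε : Fin m → Bool, ‖signSum x ε‖ ^ q) / 2 ^ m) ^ (1 / q) ≤
        Cq * (∑ i, ‖x i‖ ^ q) ^ (1 / q))
    {Ω : Type*} [MeasurableSpace Ω] (μ : Measure Ω) [IsProbabilityMeasure μ]
    (n : ℕ) (X : Fin n → Ω → E)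
    (hmeas : ∀ i, Measurable (X i))
    (haesm : ∀ i, AEStronglyMeasurable (X i) μ)
    (hindep : iIndepFun (m := fun _ : Fin n => (inferInstance : MeasurableSpace E)) X μ)
    (hint : ∀ i, Integrable (fun ω => ‖X i ω‖ ^ q) μ)
    (hmean : ∀ i, ∫ ω, X i ω ∂μ = 0) :
    (∫ ω, ‖∑ i, X i ω‖ ^ q ∂μ) ^ (1 / q) ≤
      2 * Cq * (∑ i, ∫ ω, ‖X i ω‖ ^ q ∂μ) ^ (1 / q) := by
  classical
  have hq0 : (0:ℝ) < q := lt_of_lt_of_le one_pos hq1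
  by_cases hE : ∀ v : E, v = 0
  · -- trivial space
    have hz : ∀ (v : E), ‖v‖ ^ q = 0 := fun v => by
      rw [hE v, norm_zero, Real.zero_rpow hq0.ne']
    rw [show (∫ ω, ‖∑ i, X i ω‖ ^ q ∂μ) = 0 by simp [hz]]
    rw [show (∑ i, ∫ ω, ‖X i ω‖ ^ q ∂μ) = 0 by simp [hz]]
    rw [Real.zero_rpow (one_div_ne_zero hq0.ne')]
    simp
  · push_neg at hE
    obtain ⟨v, hv⟩ := hE
    have hvpos : (0:ℝ) < ‖v‖ := norm_pos_iff.mpr hv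
    -- Cq is nonnegative
    have hCq : (0:ℝ) ≤ Cq := by
      have h := htype 1 (fun _ => v)
      have hss : ∀ ε : Fin 1 → Bool, ‖signSum (fun _ => v) ε‖ = ‖v‖ := by
        intro ε
        rw [signSum, Fin.sum_univ_one]
        cases hc : ε 0 <;> simp [hc, norm_smul]
      have hsum : (∑ ε : Fin 1 → Bool, ‖signSum (fun _ : Fin 1 => v) ε‖ ^ q) = 2 * ‖v‖ ^ q := by
        rw [Finset.sum_congr rfl (fun ε _ => by rw [hss ε]), Finset.sum_const,
          Finset.card_univ]
        have hcard : Fintype.card (Fin 1 → Bool) = 2 := by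
          rw [Fintype.card_fun]; simp
        rw [hcard, nsmul_eq_mul]
        norm_num
      have hpow : (‖v‖ ^ q) ^ (1/q) = ‖v‖ := by
        rw [one_div, ← Real.rpow_mul (norm_nonneg v), mul_inv_cancel₀ hq0.ne', Real.rpow_one]
      rw [hsum, Fin.sum_univ_one, show (2 * ‖v‖ ^ q / 2 ^ 1) = ‖v‖ ^ q by ring, hpow] at h
      nlinarith [h, hvpos]
    -- strongly measurable versions and the separable closed subspace
    have hfsm : ∀ i, StronglyMeasurable ((haesm i).mk (X i)) :=
      fun i => (haesm i).stronglyMeasurable_mk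
    have hfae : ∀ i, X i =ᵐ[μ] (haesm i).mk (X i) := fun i => (haesm i).ae_eq_mk
    set K : Submodule ℝ E :=
      (Submodule.span ℝ (⋃ i, Set.range ((haesm i).mk (X i)))).topologicalClosure with hK
    have hKsep : TopologicalSpace.IsSeparable (K : Set E) := by
      have h1 : TopologicalSpace.IsSeparable (⋃ i, Set.range ((haesm i).mk (X i))) :=
        TopologicalSpace.IsSeparable.iUnion (fun i => (hfsm i).isSeparable_range)
      rw [hK, Submodule.topologicalClosure_coe]
      exact (TopologicalSpace.IsSeparable.span (R := ℝ) h1).closure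
    haveI : CompleteSpace K :=
      (Submodule.isClosed_topologicalClosure _).completeSpace_coe
    haveI : TopologicalSpace.SeparableSpace K := hKsep.separableSpace
    haveI : SecondCountableTopology K := UniformSpace.secondCountable_of_separable _
    haveI : BorelSpace K := Subtype.borelSpace (K : Set E)
    -- the retraction onto K
    set φ : E → K := fun e => ⟨if e ∈ K then e else 0,
      by split_ifs with h; exacts [h, K.zero_mem]⟩ with hφ
    have hφmeas : Measurable φ := by
      apply Measurable.subtype_mk
      exact Measurable.ite (Submodule.isClosed_topologicalClosure _).measurableSet
        measurable_id measurable_const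
    have hφcoe : ∀ e ∈ K, (φ e : E) = e := fun e he => by simp [hφ, if_pos he]
    set X' : Fin n → Ω → K := fun i => φ ∘ X i with hX'
    have hX'meas : ∀ i, Measurable (X' i) := fun i => hφmeas.comp (hmeas i)
    have hmem : ∀ i, ∀ᵐ ω ∂μ, X i ω ∈ K := by
      intro i
      filter_upwards [hfae i] with ω hω
      rw [hω]
      exact Submodule.le_topologicalClosure _
        (Submodule.subset_span (Set.mem_iUnion.mpr ⟨i, Set.mem_range_self ω⟩))
    have hX'ae : ∀ i, (fun ω => (X' i ω : E)) =ᵐ[μ] X i := by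
      intro i
      filter_upwards [hmem i] with ω hω
      exact hφcoe _ hω
    -- transferred hypotheses
    have hindep' : iIndepFun (m := fun _ : Fin n => (inferInstance : MeasurableSpace K)) X' μ :=
      hindep.comp (fun _ => φ) (fun _ => hφmeas)
    have hnorm_ae : ∀ i, (fun ω => ‖X i ω‖ ^ q) =ᵐ[μ] (fun ω => ‖X' i ω‖ ^ q) := by
      intro i
      filter_upwards [hX'ae i] with ω hω
      rw [← hω, Submodule.norm_coe]
    have hint' : ∀ i, Integrable (fun ω => ‖X' i ω‖ ^ q) μ :=
      fun i => (hint i).congr (hnorm_ae i)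
    have hXint : ∀ i, Integrable (X i) μ := by
      intro i
      have hqq1 : (1:ℝ≥0∞) ≤ ENNReal.ofReal q := by
        rw [← ENNReal.ofReal_one]; exact ENNReal.ofReal_le_ofReal hq1
      refine MemLp.integrable hqq1 ⟨haesm i, ?_⟩
      rw [eLpNorm_eq_lintegral_rpow_enorm_toReal (by simp [ENNReal.ofReal_eq_zero, not_le, hq0])
        ENNReal.ofReal_ne_top, ENNReal.toReal_ofReal hq0.le]
      refine ENNReal.rpow_lt_top_of_nonneg (by positivity) ?_
      have hfin := (hint i).2
      rw [HasFiniteIntegral] at hfin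
      have heq : ∀ ω, (‖(‖X i ω‖ ^ q)‖₊ : ℝ≥0∞) = (‖X i ω‖₊ : ℝ≥0∞) ^ q := by
        intro ω
        rw [← enorm_eq_nnnorm, Real.enorm_eq_ofReal (Real.rpow_nonneg (norm_nonneg _) _),
          ← ENNReal.ofReal_rpow_of_nonneg (norm_nonneg _) hq0.le, ofReal_norm, enorm_eq_nnnorm]
      simp only [enorm_eq_nnnorm, ← heq]
      exact hfin.ne
    have hX'int : ∀ i, Integrable (X' i) μ := by
      intro i
      refine Integrable.mono' (hXint i).norm
        (hX'meas i).stronglyMeasurable.aestronglyMeasurable ?_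
      filter_upwards [hX'ae i] with ω hω
      rw [← Submodule.norm_coe (X' i ω), hω]
    have hmean' : ∀ i, ∫ ω, X' i ω ∂μ = 0 := by
      intro i
      have hc := (K.subtypeL).integral_comp_comm (hX'int i)
      have hl : ∫ ω, (K.subtypeL) (X' i ω) ∂μ = 0 := by
        have : (fun ω => (K.subtypeL) (X' i ω)) =ᵐ[μ] X i := hX'ae i
        rw [integral_congr_ae this, hmean i]
      rw [hl] at hc
      have : ((∫ ω, X' i ω ∂μ : K) : E) = 0 := hc.symm
      exact Subtype.ext this
    have htype' : ∀ (m : ℕ) (x : Fin m → K),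
        ((∑ ε : Fin m → Bool, ‖signSum x ε‖ ^ q) / 2 ^ m) ^ (1 / q) ≤
          Cq * (∑ i, ‖x i‖ ^ q) ^ (1 / q) := by
      intro m x
      have h := htype m (fun i => (x i : E))
      have h1 : ∀ ε : Fin m → Bool, ‖signSum (fun i => ((x i : E))) ε‖ = ‖signSum x ε‖ := by
        intro ε
        rw [show signSum (fun i => ((x i : E))) ε = ((signSum x ε : K) : E) by
          rw [signSum, signSum, Submodule.coe_sum]
          exact Finset.sum_congr rfl fun i _ => by rw [Submodule.coe_smul]]
        rw [Submodule.norm_coe]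
      have h2 : ∀ i, ‖(x i : E)‖ = ‖x i‖ := fun i => Submodule.norm_coe _
      simp only [h1, h2] at h
      exact h
    have main := aux_main q Cq hq1 hCq htype' μ n X' hX'meas hindep' hint' hmean'
    have hsum_ae : (fun ω => ‖∑ i, X i ω‖ ^ q) =ᵐ[μ] (fun ω => ‖∑ i, X' i ω‖ ^ q) := by
      have hall : ∀ᵐ ω ∂μ, ∀ i, (X' i ω : E) = X i ω := (MeasureTheory.ae_all_iff).mpr hX'ae
      filter_upwards [hall] with ω hω
      have : ‖∑ i, X i ω‖ = ‖∑ i, X' i ω‖ := by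
        rw [← Submodule.norm_coe (∑ i, X' i ω), Submodule.coe_sum]
        congr 1
        exact Finset.sum_congr rfl fun i _ => (hω i).symm
      rw [this]
    rw [integral_congr_ae hsum_ae,
      Finset.sum_congr rfl (fun i _ => integral_congr_ae (hnorm_ae i))]
    exact main
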